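/- Let G be a brick (a 3-connected bicritical graph) and let G' be a conservative-quadratic extension of G with new vertices u', v'. Then G' is a brick. -/

import Mathlib

open SimpleGraph Sum

def ThreeConnected {V : Type*} [Fintype V] (G : SimpleGraph V) : Prop :=
  4 ≤ Fintype.card V ∧ ∀ S : Set V, S.ncard ≤ 2 → (G.induce Sᶜ).Connected

def Bicritical {V : Type*} (G : SimpleGraph V) : Prop :=
  ∀ a b : V, a ≠ b →
    ∃ M : (G.induce ({a, b}ᶜ : Set V)).Subgraph, M.IsPerfectMatching

def consQuadExt {V : Type*} (G : SimpleGraph V) (u v x y : V) :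
    SimpleGraph (V ⊕ Bool) :=
  SimpleGraph.fromEdgeSet
    ((Sym2.map inl '' G.edgeSet) ∪
      {s(inr false, inr true), s(inr false, inl u), s(inr false, inl x),
       s(inr true, inl v), s(inr true, inl y)})

section Helpers

variable {V : Type*} {G : SimpleGraph V} {u v x y : V}

lemma exists_adj_of_reachable {W : Type*} {H : SimpleGraph W} {a b : W} (hab : a ≠ b)
    (h : H.Reachable a b) : ∃ c d, H.Adj c d := by
  obtain ⟨p⟩ := h
  cases p with
  | nil => exact absurd rfl hab
  | cons h _ => exact ⟨_, _, h⟩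

lemma cqe_adj_inl {a b : V} (h : G.Adj a b) :
    (consQuadExt G u v x y).Adj (inl a) (inl b) := by
  rw [consQuadExt, fromEdgeSet_adj]
  exact ⟨Or.inl ⟨s(a,b), h, by simp⟩, by simp [h.ne]⟩

lemma cqe_adj_ft : (consQuadExt G u v x y).Adj (inr false) (inr true) := by
  rw [consQuadExt, fromEdgeSet_adj]; exact ⟨Or.inr (by simp), by simp⟩

lemma cqe_adj_fu : (consQuadExt G u v x y).Adj (inr false) (inl u) := by
  rw [consQuadExt, fromEdgeSet_adj]; exact ⟨Or.inr (by simp), by simp⟩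

lemma cqe_adj_fx : (consQuadExt G u v x y).Adj (inr false) (inl x) := by
  rw [consQuadExt, fromEdgeSet_adj]; exact ⟨Or.inr (by simp), by simp⟩

lemma cqe_adj_tv : (consQuadExt G u v x y).Adj (inr true) (inl v) := by
  rw [consQuadExt, fromEdgeSet_adj]; exact ⟨Or.inr (by simp), by simp⟩

lemma cqe_adj_ty : (consQuadExt G u v x y).Adj (inr true) (inl y) := by
  rw [consQuadExt, fromEdgeSet_adj]; exact ⟨Or.inr (by simp), by simp⟩

lemma pm_of_involution {W : Type*} (H : SimpleGraph W) (f : W → W)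
    (hinv : ∀ w, f (f w) = w) (hadj : ∀ w, H.Adj w (f w)) :
    ∃ M : H.Subgraph, M.IsPerfectMatching := by
  refine ⟨⟨Set.univ, fun a b => b = f a, fun {a b} h => h ▸ hadj a,
    fun {a b} _ => trivial, ⟨fun a b h => ?_⟩⟩,
    fun a _ => ⟨f a, rfl, fun w hw => hw⟩, fun a => trivial⟩
  subst h; exact (hinv a).symm

lemma pm_of_fun {W : Type*} (H : SimpleGraph W) (S : Set W) (f : W → W)
    (hmem : ∀ z ∈ S, f z ∈ S) (hinv : ∀ z ∈ S, f (f z) = z)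
    (hadj : ∀ z ∈ S, H.Adj z (f z)) :
    ∃ M : (H.induce S).Subgraph, M.IsPerfectMatching := by
  apply pm_of_involution _ (fun z => (⟨f z.val, hmem _ z.prop⟩ : S))
  · intro w; exact Subtype.ext (hinv _ w.prop)
  · intro w; exact hadj _ w.prop

lemma pm_fun {W : Type*} {H : SimpleGraph W} {M : H.Subgraph} (hM : M.IsPerfectMatching) :
    ∃ g : W → W, (∀ w, g (g w) = w) ∧ (∀ w, H.Adj w (g w)) := by
  choose g hg hunique using fun w => hM.1 (hM.2 w)
  exact ⟨g, fun w => (hunique (g w) w (M.adj_symm (hg w))).symm, fun w => M.adj_sub (hg w)⟩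

lemma bicrit_case_inl (hbi : Bicritical G) (a₀ b₀ : V) (hab : a₀ ≠ b₀) :
    ∃ M : ((consQuadExt G u v x y).induce ({inl a₀, inl b₀}ᶜ : Set (V ⊕ Bool))).Subgraph,
      M.IsPerfectMatching := by
  classical
  obtain ⟨M, hM⟩ := hbi a₀ b₀ hab
  obtain ⟨g, hginv, hgadj⟩ := pm_fun hM
  refine pm_of_fun _ _ (fun z => match z with
    | inr b => inr (!b)
    | inl w => if hw : w ∈ ({a₀, b₀}ᶜ : Set V) then inl (g ⟨w, hw⟩).val else inl w)
    ?_ ?_ ?_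
  · rintro (w | b) hz
    · have hw : w ∈ ({a₀, b₀}ᶜ : Set V) := by
        simp only [Set.mem_compl_iff, Set.mem_insert_iff, Set.mem_singleton_iff] at hz ⊢
        tauto
      simp only [dif_pos hw]
      have := (g ⟨w, hw⟩).prop
      simp only [Set.mem_compl_iff, Set.mem_insert_iff, Set.mem_singleton_iff,
        Sum.inl.injEq, Sum.inr.injEq, reduceCtorEq] at this ⊢
      tauto
    · simp
  · rintro (w | b) hz
    · have hw : w ∈ ({a₀, b₀}ᶜ : Set V) := by
        simp only [Set.mem_compl_iff, Set.mem_insert_iff, Set.mem_singleton_iff] at hz ⊢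
        tauto
      simp only [dif_pos hw, dif_pos (g ⟨w, hw⟩).prop]
      have : (⟨(g ⟨w, hw⟩).val, (g ⟨w, hw⟩).prop⟩ : ({a₀, b₀}ᶜ : Set V)) = g ⟨w, hw⟩ :=
        Subtype.ext rfl
      rw [this, hginv]
    · simp
  · rintro (w | b) hz
    · have hw : w ∈ ({a₀, b₀}ᶜ : Set V) := by
        simp only [Set.mem_compl_iff, Set.mem_insert_iff, Set.mem_singleton_iff] at hz ⊢
        tauto
      simp only [dif_pos hw]
      exact cqe_adj_inl (hgadj ⟨w, hw⟩)
    · cases b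
      · exact cqe_adj_ft
      · exact cqe_adj_ft.symm

lemma bicrit_case_special (hbi : Bicritical G) (r : Bool) (b₀ p : V) (hpb : p ≠ b₀)
    (hpedge : (consQuadExt G u v x y).Adj (inr (!r)) (inl p)) :
    ∃ M : ((consQuadExt G u v x y).induce ({inr r, inl b₀}ᶜ : Set (V ⊕ Bool))).Subgraph,
      M.IsPerfectMatching := by
  classical
  obtain ⟨M, hM⟩ := hbi p b₀ hpb
  obtain ⟨g, hginv, hgadj⟩ := pm_fun hM
  refine pm_of_fun _ _ (fun z => match z with
    | inr _ => inl p
    | inl w => if hw : w ∈ ({p, b₀}ᶜ : Set V) then inl (g ⟨w, hw⟩).val else inr (!r))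
    ?_ ?_ ?_
  · rintro (w | b) hz
    · by_cases hw : w ∈ ({p, b₀}ᶜ : Set V)
      · simp only [dif_pos hw]
        have := (g ⟨w, hw⟩).prop
        simp only [Set.mem_compl_iff, Set.mem_insert_iff, Set.mem_singleton_iff,
          Sum.inl.injEq, Sum.inr.injEq, reduceCtorEq] at this ⊢
        tauto
      · simp only [dif_neg hw]
        simp [Bool.not_ne_self]
    · simp [hpb]
  · rintro (w | b) hz
    · by_cases hw : w ∈ ({p, b₀}ᶜ : Set V)
      · simp only [dif_pos hw, dif_pos (g ⟨w, hw⟩).prop]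
        have : (⟨(g ⟨w, hw⟩).val, (g ⟨w, hw⟩).prop⟩ : ({p, b₀}ᶜ : Set V)) = g ⟨w, hw⟩ :=
          Subtype.ext rfl
        rw [this, hginv]
      · -- w = p
        have hwp : w = p := by
          have hw' : w ∈ ({p, b₀} : Set V) := Set.notMem_compl_iff.mp hw
          have hzb : w ≠ b₀ := by
            intro h; subst h; exact hz (by simp)
          rcases hw' with h | h
          · exact h
          · exact absurd h hzb
        simp only [dif_neg hw]
        simp [hwp]
    · -- b must be !r
      have hb : b = !r := by
        have : (inr b : V ⊕ Bool) ≠ inr r := by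
          intro h; exact hz (by simp [h])
        cases b <;> cases r <;> simp_all
      have hpn : p ∉ ({p, b₀}ᶜ : Set V) := by simp
      simp [hpn, hb]
  · rintro (w | b) hz
    · by_cases hw : w ∈ ({p, b₀}ᶜ : Set V)
      · simp only [dif_pos hw]
        exact cqe_adj_inl (hgadj ⟨w, hw⟩)
      · have hwp : w = p := by
          have hw' : w ∈ ({p, b₀} : Set V) := Set.notMem_compl_iff.mp hw
          have hzb : w ≠ b₀ := by
            intro h; subst h; exact hz (by simp)
          rcases hw' with h | h
          · exact h
          · exact absurd h hzb
        simp only [dif_neg hw]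
        subst hwp
        exact hpedge.symm
    · have hb : b = !r := by
        have : (inr b : V ⊕ Bool) ≠ inr r := by
          intro h; exact hz (by simp [h])
        cases b <;> cases r <;> simp_all
      subst hb
      exact hpedge

lemma bicrit_case_inr (hbi : Bicritical G) (r s : V) (hrs : G.Adj r s) :
    ∃ M : ((consQuadExt G u v x y).induce
      ({inr false, inr true}ᶜ : Set (V ⊕ Bool))).Subgraph, M.IsPerfectMatching := by
  classical
  obtain ⟨M, hM⟩ := hbi r s hrs.ne
  obtain ⟨g, hginv, hgadj⟩ := pm_fun hM
  refine pm_of_fun _ _ (fun z => match z with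
    | inr b => inr (!b)
    | inl w => if hw : w ∈ ({r, s}ᶜ : Set V) then inl (g ⟨w, hw⟩).val
               else if w = r then inl s else inl r)
    ?_ ?_ ?_
  · rintro (w | b) hz
    · by_cases hw : w ∈ ({r, s}ᶜ : Set V)
      · simp only [dif_pos hw]
        simp
      · simp only [dif_neg hw]
        split <;> simp
    · exfalso
      cases b
      · exact hz (by simp)
      · exact hz (by simp)
  · rintro (w | b) hz
    · by_cases hw : w ∈ ({r, s}ᶜ : Set V)
      · simp only [dif_pos hw, dif_pos (g ⟨w, hw⟩).prop]
        have : (⟨(g ⟨w, hw⟩).val, (g ⟨w, hw⟩).prop⟩ : ({r, s}ᶜ : Set V)) = g ⟨w, hw⟩ :=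
          Subtype.ext rfl
        rw [this, hginv]
      · have hw' : w = r ∨ w = s := Set.notMem_compl_iff.mp hw
        have hsr : s ∉ ({r, s}ᶜ : Set V) := by simp
        have hrr : r ∉ ({r, s}ᶜ : Set V) := by simp
        rcases hw' with h | h <;> subst h
        · simp [dif_neg hw, dif_neg hsr, hrs.ne']
        · simp [dif_neg hw, dif_neg hrr, hrs.ne']
    · exfalso
      cases b
      · exact hz (by simp)
      · exact hz (by simp)
  · rintro (w | b) hz
    · by_cases hw : w ∈ ({r, s}ᶜ : Set V)
      · simp only [dif_pos hw]
        exact cqe_adj_inl (hgadj ⟨w, hw⟩)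
      · have hw' : w = r ∨ w = s := Set.notMem_compl_iff.mp hw
        rcases hw' with h | h <;> subst h
        · simp only [dif_neg hw, if_pos rfl]
          exact cqe_adj_inl hrs
        · simp only [dif_neg hw, if_neg hrs.ne']
          exact cqe_adj_inl hrs.symm
    · exfalso
      cases b
      · exact hz (by simp)
      · exact hz (by simp)


lemma bicrit_mixed (hbi : Bicritical G) (hx : x ≠ u) (hy : y ≠ v) (rb : Bool) (b₀ : V) :
    ∃ M : ((consQuadExt G u v x y).induce ({inr rb, inl b₀}ᶜ : Set (V ⊕ Bool))).Subgraph,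
      M.IsPerfectMatching := by
  classical
  cases rb with
  | false =>
    by_cases hb : b₀ = v
    · rw [hb]
      exact bicrit_case_special hbi false v y hy cqe_adj_ty
    · exact bicrit_case_special hbi false b₀ v (fun h => hb h.symm) cqe_adj_tv
  | true =>
    by_cases hb : b₀ = u
    · rw [hb]
      exact bicrit_case_special hbi true u x hx cqe_adj_fx
    · exact bicrit_case_special hbi true b₀ u (fun h => hb h.symm) cqe_adj_fu

variable [Fintype V]

lemma reach_inl (hG3 : ThreeConnected G) (S : Set (V ⊕ Bool)) (hS : S.ncard ≤ 2)
    {w₁ w₂ : V} (h₁ : inl w₁ ∈ Sᶜ) (h₂ : inl w₂ ∈ Sᶜ) :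
    ((consQuadExt G u v x y).induce Sᶜ).Reachable ⟨inl w₁, h₁⟩ ⟨inl w₂, h₂⟩ := by
  classical
  set T : Set V := {w : V | inl w ∈ S} with hT
  have hTcard : T.ncard ≤ 2 := by
    have him : inl '' T ⊆ S := by rintro _ ⟨w, hw, rfl⟩; exact hw
    calc T.ncard = (inl '' T).ncard := (Set.ncard_image_of_injective _ inl_injective).symm
    _ ≤ S.ncard := Set.ncard_le_ncard him (Set.toFinite S)
    _ ≤ 2 := hS
  have hconn := hG3.2 T hTcard
  have hr : (G.induce Tᶜ).Reachable ⟨w₁, h₁⟩ ⟨w₂, h₂⟩ := hconn.preconnected _ _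
  exact Reachable.map
    (⟨fun z => ⟨inl z.val, z.prop⟩, fun {a b} hab =>
        cqe_adj_inl (show G.Adj a.val b.val from hab)⟩ :
      G.induce Tᶜ →g (consQuadExt G u v x y).induce Sᶜ) hr

lemma hub_lemma (huv : u ≠ v) (hx : x ≠ u) (hy : y ≠ v) (hne : ({u, v} : Set V) ≠ {x, y})
    (S : Set (V ⊕ Bool)) (hS : S.ncard ≤ 2) (z : V ⊕ Bool) (hz : z ∈ Sᶜ) :
    ∃ w, ∃ hw : inl w ∈ Sᶜ,
      ((consQuadExt G u v x y).induce Sᶜ).Reachable ⟨z, hz⟩ ⟨inl w, hw⟩ := by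
  classical
  match z with
  | inl w => exact ⟨w, hz, Reachable.refl _⟩
  | inr false =>
    by_cases hu : inl u ∈ S
    · by_cases hxS : inl x ∈ S
      · have hux : (inl u : V ⊕ Bool) ≠ inl x := by
          intro h; exact hx (inl_injective h).symm
        have hpair : ({inl u, inl x} : Set (V ⊕ Bool)).ncard = 2 := Set.ncard_pair hux
        have hsub : ({inl u, inl x} : Set (V ⊕ Bool)) ⊆ S := by
          rintro z (rfl | rfl)
          · exact hu
          · exact hxS
        have hSeq : S = {inl u, inl x} :=
          (Set.eq_of_subset_of_ncard_le hsub (hS.trans_eq hpair.symm) (Set.toFinite S)).symm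
        have hp : ∃ p : V, (consQuadExt G u v x y).Adj (inr true) (inl p) ∧ inl p ∉ S := by
          by_cases hv : inl v ∈ S
          · by_cases hyS : inl y ∈ S
            · exfalso
              have hvux : v = u ∨ v = x := by
                rw [hSeq] at hv; simpa using hv
              have hyux : y = u ∨ y = x := by
                rw [hSeq] at hyS; simpa using hyS
              have hvx : v = x := hvux.resolve_left huv.symm
              have hyu : y = u := by
                rcases hyux with h | h
                · exact h
                · exact absurd (h.trans hvx.symm) hy
              exact hne (by rw [hyu.symm, hvx, Set.pair_comm])
            · exact ⟨y, cqe_adj_ty, hyS⟩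
          · exact ⟨v, cqe_adj_tv, hv⟩
        obtain ⟨p, hpadj, hpS⟩ := hp
        have ht : (inr true : V ⊕ Bool) ∈ Sᶜ := by rw [hSeq]; simp
        refine ⟨p, hpS, ?_⟩
        have e1 : ((consQuadExt G u v x y).induce Sᶜ).Adj ⟨inr false, hz⟩ ⟨inr true, ht⟩ :=
          cqe_adj_ft
        have e2 : ((consQuadExt G u v x y).induce Sᶜ).Adj ⟨inr true, ht⟩ ⟨inl p, hpS⟩ := hpadj
        exact e1.reachable.trans e2.reachable
      · refine ⟨x, hxS, ?_⟩
        have e : ((consQuadExt G u v x y).induce Sᶜ).Adj ⟨inr false, hz⟩ ⟨inl x, hxS⟩ :=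
          cqe_adj_fx
        exact e.reachable
    · refine ⟨u, hu, ?_⟩
      have e : ((consQuadExt G u v x y).induce Sᶜ).Adj ⟨inr false, hz⟩ ⟨inl u, hu⟩ :=
        cqe_adj_fu
      exact e.reachable
  | inr true =>
    by_cases hv : inl v ∈ S
    · by_cases hyS : inl y ∈ S
      · have hvy : (inl v : V ⊕ Bool) ≠ inl y := by
          intro h; exact hy (inl_injective h).symm
        have hpair : ({inl v, inl y} : Set (V ⊕ Bool)).ncard = 2 := Set.ncard_pair hvy
        have hsub : ({inl v, inl y} : Set (V ⊕ Bool)) ⊆ S := by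
          rintro z (rfl | rfl)
          · exact hv
          · exact hyS
        have hSeq : S = {inl v, inl y} :=
          (Set.eq_of_subset_of_ncard_le hsub (hS.trans_eq hpair.symm) (Set.toFinite S)).symm
        have hp : ∃ p : V, (consQuadExt G u v x y).Adj (inr false) (inl p) ∧ inl p ∉ S := by
          by_cases hu : inl u ∈ S
          · by_cases hxS : inl x ∈ S
            · exfalso
              have huvy : u = v ∨ u = y := by
                rw [hSeq] at hu; simpa using hu
              have hxvy : x = v ∨ x = y := by
                rw [hSeq] at hxS; simpa using hxS
              have huy : u = y := huvy.resolve_left huv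
              have hxv : x = v := by
                rcases hxvy with h | h
                · exact h
                · exact absurd (h.trans huy.symm) hx
              exact hne (by rw [huy, hxv.symm, Set.pair_comm])
            · exact ⟨x, cqe_adj_fx, hxS⟩
          · exact ⟨u, cqe_adj_fu, hu⟩
        obtain ⟨p, hpadj, hpS⟩ := hp
        have ht : (inr false : V ⊕ Bool) ∈ Sᶜ := by rw [hSeq]; simp
        refine ⟨p, hpS, ?_⟩
        have e1 : ((consQuadExt G u v x y).induce Sᶜ).Adj ⟨inr true, hz⟩ ⟨inr false, ht⟩ :=
          cqe_adj_ft.symm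
        have e2 : ((consQuadExt G u v x y).induce Sᶜ).Adj ⟨inr false, ht⟩ ⟨inl p, hpS⟩ := hpadj
        exact e1.reachable.trans e2.reachable
      · refine ⟨y, hyS, ?_⟩
        have e : ((consQuadExt G u v x y).induce Sᶜ).Adj ⟨inr true, hz⟩ ⟨inl y, hyS⟩ :=
          cqe_adj_ty
        exact e.reachable
    · refine ⟨v, hv, ?_⟩
      have e : ((consQuadExt G u v x y).induce Sᶜ).Adj ⟨inr true, hz⟩ ⟨inl v, hv⟩ :=
        cqe_adj_tv
      exact e.reachable

lemma cqe_threeConnected (hG3 : ThreeConnected G)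
    (huv : u ≠ v) (hx : x ≠ u) (hy : y ≠ v) (hne : ({u, v} : Set V) ≠ {x, y}) :
    ThreeConnected (consQuadExt G u v x y) := by
  classical
  constructor
  · have := hG3.1
    simp only [Fintype.card_sum, Fintype.card_bool]
    omega
  · intro S hS
    rw [connected_iff]
    constructor
    · rintro ⟨z₁, hz₁⟩ ⟨z₂, hz₂⟩
      obtain ⟨w₁, hw₁, r₁⟩ := hub_lemma huv hx hy hne S hS z₁ hz₁
      obtain ⟨w₂, hw₂, r₂⟩ := hub_lemma huv hx hy hne S hS z₂ hz₂
      exact r₁.trans ((reach_inl hG3 S hS hw₁ hw₂).trans r₂.symm)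
    · have hne' : S ≠ Set.univ := by
        intro h
        rw [h, Set.ncard_univ, Nat.card_eq_fintype_card, Fintype.card_sum] at hS
        have := hG3.1
        omega
      obtain ⟨z, hzS⟩ := Set.ne_univ_iff_exists_notMem S |>.mp hne'
      exact ⟨⟨z, hzS⟩⟩


end Helpers

theorem stmt_6 {V : Type*} [Fintype V] (G : SimpleGraph V) (u v x y : V)
    (hbrick : ThreeConnected G ∧ Bicritical G)
    (huv : u ≠ v) (hadj : ¬ G.Adj u v)
    (hx : x ≠ u) (hy : y ≠ v) (hne : ({u, v} : Set V) ≠ {x, y}) :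
    ThreeConnected (consQuadExt G u v x y) ∧
      Bicritical (consQuadExt G u v x y) := by
  classical
  obtain ⟨hG3, hbi⟩ := hbrick
  refine ⟨cqe_threeConnected hG3 huv hx hy hne, ?_⟩
  have hedge : ∃ r s : V, G.Adj r s := by
    have hconn0 := hG3.2 ∅ (by simp)
    have hr : (G.induce ((∅ : Set V)ᶜ)).Reachable ⟨u, by simp⟩ ⟨v, by simp⟩ :=
      hconn0.preconnected _ _
    have hne' : (⟨u, by simp⟩ : ((∅ : Set V)ᶜ : Set V)) ≠ ⟨v, by simp⟩ :=
      fun h => huv (congrArg Subtype.val h)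
    obtain ⟨c, d, hcd⟩ := exists_adj_of_reachable hne' hr
    exact ⟨c.val, d.val, hcd⟩
  obtain ⟨r₀, s₀, hrs⟩ := hedge
  intro a b hab
  rcases a with a₀ | ra <;> rcases b with b₀ | rb
  · exact bicrit_case_inl hbi a₀ b₀ (fun h => hab (by rw [h]))
  · rw [Set.pair_comm]
    exact bicrit_mixed hbi hx hy rb a₀
  · exact bicrit_mixed hbi hx hy ra b₀
  · cases ra <;> cases rb
    · exact absurd rfl hab
    · exact bicrit_case_inr hbi r₀ s₀ hrs
    · rw [Set.pair_comm]
      exact bicrit_case_inr hbi r₀ s₀ hrs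
    · exact absurd rfl hab
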